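/- Let N and σ be PSD n×n complex matrices, let P be an orthogonal projection (P² = P = Pᴴ) with NP = PN, let q̄ > 0 be real with q̄·P ≼ N·P in the Loewner order, and let s ≤ p be natural numbers. Then tr(Nˢ·P·σ) is a nonnegative real number and q̄^(p−s) · tr(Nˢ·P·σ) ≤ tr(N^p·σ). -/

import Mathlib

open scoped Matrix ComplexOrder

section Aux

variable {m : ℕ}

private lemma trace_nonneg_of_psd {A : Matrix (Fin m) (Fin m) ℂ} (hA : A.PosSemidef) :
    0 ≤ A.trace := by
  rw [Matrix.trace]
  refine Finset.sum_nonneg fun i _ => ?_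
  have := hA.dotProduct_mulVec_nonneg (Pi.single i 1)
  simpa [dotProduct, Matrix.mulVec, Pi.single_apply, Matrix.diag, Finset.mul_sum] using this

private noncomputable def PSqrt {A : Matrix (Fin m) (Fin m) ℂ} (hA : A.PosSemidef) :
    Matrix (Fin m) (Fin m) ℂ :=
  (hA.1.eigenvectorUnitary : Matrix (Fin m) (Fin m) ℂ) *
    Matrix.diagonal ((↑) ∘ Real.sqrt ∘ hA.1.eigenvalues) *
    star (hA.1.eigenvectorUnitary : Matrix (Fin m) (Fin m) ℂ)

private lemma PSqrt_herm {A : Matrix (Fin m) (Fin m) ℂ} (hA : A.PosSemidef) :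
    (PSqrt hA)ᴴ = PSqrt hA := by
  unfold PSqrt
  rw [Matrix.conjTranspose_mul, Matrix.conjTranspose_mul, Matrix.diagonal_conjTranspose]
  simp only [Matrix.star_eq_conjTranspose, Matrix.conjTranspose_conjTranspose, mul_assoc]
  congr 3
  funext i
  simp [Complex.conj_ofReal]

private lemma PSqrt_mul_self {A : Matrix (Fin m) (Fin m) ℂ} (hA : A.PosSemidef) :
    PSqrt hA * PSqrt hA = A := by
  have hV1 : star (hA.1.eigenvectorUnitary : Matrix (Fin m) (Fin m) ℂ) *
      (hA.1.eigenvectorUnitary : Matrix (Fin m) (Fin m) ℂ) = 1 :=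
    Matrix.mem_unitaryGroup_iff'.mp hA.1.eigenvectorUnitary.2
  have hspec := hA.1.spectral_theorem
  rw [Unitary.conjStarAlgAut_apply] at hspec
  conv_rhs => rw [hspec]
  unfold PSqrt
  simp only [mul_assoc]
  rw [← mul_assoc (star _) _ (Matrix.diagonal _ * _), hV1, one_mul, ← mul_assoc (Matrix.diagonal _),
    Matrix.diagonal_mul_diagonal]
  congr 3
  funext i
  simp only [Function.comp_apply]
  rw [← Complex.ofReal_mul, Real.mul_self_sqrt (hA.eigenvalues_nonneg i)]
  rfl

private lemma sqrt_commute {A B : Matrix (Fin m) (Fin m) ℂ} (hA : A.PosSemidef)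
    (h : A * B = B * A) : PSqrt hA * B = B * PSqrt hA := by
  set V : Matrix (Fin m) (Fin m) ℂ := (hA.1.eigenvectorUnitary : Matrix (Fin m) (Fin m) ℂ) with hV
  have hV1 : star V * V = 1 := Matrix.mem_unitaryGroup_iff'.mp hA.1.eigenvectorUnitary.2
  have hV2 : V * star V = 1 := Matrix.mem_unitaryGroup_iff.mp hA.1.eigenvectorUnitary.2
  set d := hA.1.eigenvalues with hd
  set D : Matrix (Fin m) (Fin m) ℂ := Matrix.diagonal ((↑) ∘ d) with hD
  set S : Matrix (Fin m) (Fin m) ℂ := Matrix.diagonal ((↑) ∘ Real.sqrt ∘ d) with hS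
  set C : Matrix (Fin m) (Fin m) ℂ := star V * B * V with hC
  have hspec : A = V * D * star V := by
    have := hA.1.spectral_theorem; rwa [Unitary.conjStarAlgAut_apply] at this
  have hDC : D * C = C * D := by
    have h' : V * D * star V * B = B * (V * D * star V) := by rw [← hspec]; exact h
    calc D * C = star V * (V * D * star V * B) * V := by
          simp only [hC, ← mul_assoc, hV1, one_mul]
      _ = star V * (B * (V * D * star V)) * V := by rw [h']
      _ = C * D := by
          simp only [hC, ← mul_assoc]
          rw [mul_assoc _ (star V) V, hV1, mul_one]
  have hSC : S * C = C * S := by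
    ext i j
    have hij := congrFun (congrFun hDC i) j
    simp only [hD, Matrix.diagonal_mul, Matrix.mul_diagonal, Function.comp_apply] at hij
    simp only [hS, Matrix.diagonal_mul, Matrix.mul_diagonal, Function.comp_apply]
    rcases eq_or_ne (d i) (d j) with he | he
    · rw [he, mul_comm]
    · have hC0 : C i j = 0 := by
        have : ((d i : ℂ) - (d j : ℂ)) * C i j = 0 := by ring_nf; linear_combination hij
        rcases mul_eq_zero.mp this with h0 | h0
        · exact absurd (by exact_mod_cast sub_eq_zero.mp h0) he
        · exact h0
      simp [hC0]
  have hsqrt : PSqrt hA = V * S * star V := rfl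
  calc PSqrt hA * B = V * S * (star V * B * V) * star V := by
        simp only [hsqrt, ← mul_assoc]
        rw [mul_assoc _ V (star V), hV2, mul_one]
    _ = V * (S * C) * star V := by simp only [hC, mul_assoc]
    _ = V * (C * S) * star V := by rw [hSC]
    _ = B * (V * S * star V) := by
        simp only [hC, ← mul_assoc, hV2, one_mul]
    _ = B * PSqrt hA := by rw [← hsqrt]

private lemma mul_psd_of_commute {A B : Matrix (Fin m) (Fin m) ℂ} (hA : A.PosSemidef)
    (hB : B.PosSemidef) (h : A * B = B * A) : (A * B).PosSemidef := by
  have hs := sqrt_commute hA h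
  have key : (PSqrt hA)ᴴ * B * PSqrt hA = A * B := by
    rw [PSqrt_herm hA, hs, mul_assoc, PSqrt_mul_self hA, ← h]
  rw [← key]
  exact hB.conjTranspose_mul_mul_same _

private lemma smul_psd {c : ℝ} (hc : 0 ≤ c) {A : Matrix (Fin m) (Fin m) ℂ}
    (hA : A.PosSemidef) : ((c : ℂ) • A).PosSemidef := by
  refine Matrix.PosSemidef.of_dotProduct_mulVec_nonneg ?_ ?_
  · show ((c : ℂ) • A)ᴴ = (c : ℂ) • A
    rw [Matrix.conjTranspose_smul, hA.1.eq]
    simp [Complex.star_def, Complex.conj_ofReal]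
  · intro x
    rw [Matrix.smul_mulVec, dotProduct_smul]
    exact mul_nonneg (by exact_mod_cast hc) (hA.dotProduct_mulVec_nonneg x)

private lemma trace_mul_psd_nonneg {A B : Matrix (Fin m) (Fin m) ℂ}
    (hA : A.PosSemidef) (hB : B.PosSemidef) : 0 ≤ (A * B).trace := by
  have h1 : (A * B).trace = ((PSqrt hA)ᴴ * B * PSqrt hA).trace := by
    rw [PSqrt_herm hA, Matrix.trace_mul_cycle, PSqrt_mul_self hA]
  rw [h1]
  exact trace_nonneg_of_psd (hB.conjTranspose_mul_mul_same _)

end Aux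

/-- Markov-type inequality: if `N, σ` are PSD, `P` is an orthogonal projection
commuting with `N`, `q̄ > 0` and `q̄·P ≼ N·P` (Loewner), then for naturals
`s ≤ p` the trace `tr(Nˢ·P·σ)` is a nonnegative real and
`q̄^(p−s) · tr(Nˢ·P·σ) ≤ tr(N^p·σ)`. -/
theorem stmt_7 {n : ℕ} (hn : 1 ≤ n)
    (N σ P : Matrix (Fin n) (Fin n) ℂ)
    (hN : N.PosSemidef) (hσ : σ.PosSemidef)
    (hP2 : P * P = P) (hPH : Pᴴ = P) (hNP : N * P = P * N)
    (q : ℝ) (hq : 0 < q)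
    (hdom : (N * P - (q : ℂ) • P).PosSemidef)
    (s p : ℕ) (hsp : s ≤ p) :
    0 ≤ (N ^ s * P * σ).trace.re ∧
    (N ^ s * P * σ).trace.im = 0 ∧
    q ^ (p - s) * (N ^ s * P * σ).trace.re ≤ (N ^ p * σ).trace.re := by
  have hc : Commute N P := hNP
  -- N^s * P is PSD
  have hXpsd : ∀ t : ℕ, (N ^ t * P).PosSemidef := by
    intro t
    have hct : Commute (N ^ t) P := hc.pow_left t
    have this' : Pᴴ * N ^ t * P = N ^ t * P := by
      rw [hPH, ← hct.eq, mul_assoc, hP2]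
    rw [← this']
    exact (hN.pow t).conjTranspose_mul_mul_same P
  -- key inductive claim
  have key : ∀ k : ℕ, (N ^ (s + k) - ((q : ℂ)) ^ k • (N ^ s * P)).PosSemidef := by
    intro k
    induction k with
    | zero =>
      simp only [add_zero, pow_zero, one_smul]
      have hcs : Commute (N ^ s) P := hc.pow_left s
      have he : (1 - P)ᴴ * N ^ s * (1 - P) = N ^ s - N ^ s * P := by
        rw [Matrix.conjTranspose_sub, Matrix.conjTranspose_one, hPH]
        rw [Matrix.sub_mul, one_mul, ← hcs.eq, Matrix.mul_sub, mul_one, Matrix.sub_mul,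
          mul_assoc, hP2]
        abel
      rw [← he]
      exact (hN.pow s).conjTranspose_mul_mul_same _
    | succ k ih =>
      have hcs : Commute (N ^ s) P := hc.pow_left s
      have hD : (N ^ s * (N * P - (q : ℂ) • P)).PosSemidef := by
        apply mul_psd_of_commute (hN.pow s) hdom
        exact (((Commute.refl N).pow_left s).mul_right hcs).sub_right (hcs.smul_right _) |>.eq
      have h1 : (N * (N ^ (s + k) - (q : ℂ) ^ k • (N ^ s * P))).PosSemidef := by
        apply mul_psd_of_commute hN ih
        exact (((Commute.refl N).pow_right _).sub_right
          ((((Commute.refl N).pow_right s).mul_right hc).smul_right _)).eq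
      have e1 : N * (N ^ s * P) = N ^ s * (N * P) := by
        rw [← mul_assoc, ← pow_succ', pow_succ, mul_assoc]
      have heq : N ^ (s + (k + 1)) - (q : ℂ) ^ (k + 1) • (N ^ s * P)
          = N * (N ^ (s + k) - (q : ℂ) ^ k • (N ^ s * P))
            + (q : ℂ) ^ k • (N ^ s * (N * P - (q : ℂ) • P)) := by
        rw [Matrix.mul_sub, mul_smul_comm, e1, Matrix.mul_sub, Matrix.mul_smul, smul_sub,
          smul_smul, show s + (k + 1) = (s + k) + 1 by ring, pow_succ' N (s + k),
          pow_succ (q : ℂ) k, mul_comm ((q : ℂ) ^ k) (q : ℂ)]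
        abel
      rw [heq]
      have : ((q : ℂ) ^ k • (N ^ s * (N * P - (q : ℂ) • P))).PosSemidef := by
        have := smul_psd (c := q ^ k) (by positivity) hD
        rwa [Complex.ofReal_pow] at this
      exact h1.add this
  -- trace facts
  have hz : 0 ≤ (N ^ s * P * σ).trace := trace_mul_psd_nonneg (hXpsd s) hσ
  have hzre : 0 ≤ (N ^ s * P * σ).trace.re := (Complex.le_def.mp hz).1
  have hzim : (N ^ s * P * σ).trace.im = 0 := ((Complex.le_def.mp hz).2).symm
  refine ⟨hzre, hzim, ?_⟩
  set k := p - s with hk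
  have hp : s + k = p := Nat.add_sub_cancel' hsp
  have hM := key k
  rw [hp] at hM
  have htr : 0 ≤ ((N ^ p - (q : ℂ) ^ k • (N ^ s * P)) * σ).trace := trace_mul_psd_nonneg hM hσ
  have hexp : ((N ^ p - (q : ℂ) ^ k • (N ^ s * P)) * σ).trace
      = (N ^ p * σ).trace - (q : ℂ) ^ k * (N ^ s * P * σ).trace := by
    rw [Matrix.sub_mul, Matrix.trace_sub, Matrix.smul_mul, Matrix.trace_smul, smul_eq_mul,
      mul_assoc]
  rw [hexp] at htr
  have hre := (Complex.le_def.mp htr).1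
  simp only [Complex.zero_re, Complex.sub_re, Complex.mul_re, ← Complex.ofReal_pow,
    Complex.ofReal_re, Complex.ofReal_im, hzim, mul_zero, zero_mul, sub_zero] at hre
  linarith
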